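/- Consider the exponential family on ℝ with features φ_1(x) = x and φ_2(x) = x², i.e., for θ = (θ_1, θ_2) with θ_2 > 0 let π_θ be the probability density proportional to exp(−θ_1 x − θ_2 x²) on ℝ (a normal distribution with mean m = −θ_1/(2θ_2) and variance s² = 1/(2θ_2)), and let η_1(θ) = ∫ x π_θ(x) dx and η_2(θ) = ∫ x² π_θ(x) dx. Then for every (μ_1, μ_2) ∈ ℝ² and every Λ_1 > 0, Λ_2 > 0, there exists θ = (θ_1, θ_2) with θ_2 > 0 such that θ_1 = Λ_1(η_1(θ) − μ_1) and θ_2 = Λ_2(η_2(θ) − μ_2). -/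

import Mathlib

open MeasureTheory Real Filter Set Topology

lemma my_integral_mul_exp_neg_mul_sq_zero (b : ℝ) :
    ∫ x : ℝ, x * Real.exp (-b * x ^ 2) = 0 := by
  simp only [neg_mul]
  have h := integral_neg_eq_self (fun x : ℝ => x * Real.exp (-(b * x ^ 2))) volume
  simp only [neg_sq, neg_mul, integral_neg] at h
  linarith

lemma my_integrable_sq_mul_exp_neg_mul_sq {b : ℝ} (hb : 0 < b) :
    Integrable fun x : ℝ => x ^ 2 * Real.exp (-b * x ^ 2) := by
  have h := integrable_rpow_mul_exp_neg_mul_sq hb (s := 2) (by norm_num)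
  have he : (fun x : ℝ => x ^ (2 : ℝ) * Real.exp (-b * x ^ 2))
      = fun x : ℝ => x ^ 2 * Real.exp (-b * x ^ 2) := by
    funext x
    rw [show (2 : ℝ) = ((2 : ℕ) : ℝ) by norm_num, Real.rpow_natCast]
  rwa [he] at h

lemma my_tendsto_mul_exp_atTop {b : ℝ} (hb : 0 < b) :
    Tendsto (fun y : ℝ => -(y * Real.exp (-b * y ^ 2)) / (2 * b)) atTop (𝓝 0) := by
  have h := tendsto_rpow_abs_mul_exp_neg_mul_sq_cocompact hb 1
  have h2 : Tendsto (fun x : ℝ => |x| ^ (1:ℝ) * Real.exp (-b * x ^ 2)) atTop (𝓝 0) :=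
    h.mono_left (by rw [cocompact_eq_atBot_atTop]; exact le_sup_right)
  have h3 : Tendsto (fun x : ℝ => |x| ^ (1:ℝ) * Real.exp (-b * x ^ 2) / (2 * b)) atTop (𝓝 0) := by
    simpa using h2.div_const (2 * b)
  apply squeeze_zero_norm _ h3
  intro x
  rw [Real.rpow_one, norm_div, norm_neg, norm_mul, Real.norm_eq_abs, Real.norm_eq_abs,
    Real.norm_eq_abs, abs_of_pos (by positivity : (0:ℝ) < 2 * b), abs_of_pos (Real.exp_pos _)]

lemma my_tendsto_mul_exp_atBot {b : ℝ} (hb : 0 < b) :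
    Tendsto (fun y : ℝ => -(y * Real.exp (-b * y ^ 2)) / (2 * b)) atBot (𝓝 0) := by
  have h := tendsto_rpow_abs_mul_exp_neg_mul_sq_cocompact hb 1
  have h2 : Tendsto (fun x : ℝ => |x| ^ (1:ℝ) * Real.exp (-b * x ^ 2)) atBot (𝓝 0) :=
    h.mono_left (by rw [cocompact_eq_atBot_atTop]; exact le_sup_left)
  have h3 : Tendsto (fun x : ℝ => |x| ^ (1:ℝ) * Real.exp (-b * x ^ 2) / (2 * b)) atBot (𝓝 0) := by
    simpa using h2.div_const (2 * b)
  apply squeeze_zero_norm _ h3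
  intro x
  rw [Real.rpow_one, norm_div, norm_neg, norm_mul, Real.norm_eq_abs, Real.norm_eq_abs,
    Real.norm_eq_abs, abs_of_pos (by positivity : (0:ℝ) < 2 * b), abs_of_pos (Real.exp_pos _)]

lemma my_integral_sq_mul_exp_neg_mul_sq {b : ℝ} (hb : 0 < b) :
    ∫ x : ℝ, x ^ 2 * Real.exp (-b * x ^ 2) = Real.sqrt (π / b) / (2 * b) := by
  set F : ℝ → ℝ := fun y => -(y * Real.exp (-b * y ^ 2)) / (2 * b) with hF
  set f' : ℝ → ℝ := fun y => y ^ 2 * Real.exp (-b * y ^ 2) - Real.exp (-b * y ^ 2) / (2 * b)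
    with hf'
  have hderiv : ∀ y : ℝ, HasDerivAt F (f' y) y := by
    intro y
    have h1 : HasDerivAt (fun y : ℝ => -b * y ^ 2) (-b * (2 * y)) y := by
      simpa using (hasDerivAt_pow 2 y).const_mul (-b)
    have h2 : HasDerivAt (fun y : ℝ => Real.exp (-b * y ^ 2))
        (Real.exp (-b * y ^ 2) * (-b * (2 * y))) y := h1.exp
    have h3 : HasDerivAt (fun y : ℝ => y * Real.exp (-b * y ^ 2))
        (1 * Real.exp (-b * y ^ 2) + y * (Real.exp (-b * y ^ 2) * (-b * (2 * y)))) y :=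
      (hasDerivAt_id y).mul h2
    have h4 := (h3.neg).div_const (2 * b)
    refine HasDerivAt.congr_deriv h4 ?_
    simp only [hf']
    field_simp
    ring
  have hint : Integrable f' :=
    (my_integrable_sq_mul_exp_neg_mul_sq hb).sub ((integrable_exp_neg_mul_sq hb).div_const _)
  have hIoi : ∫ y in Set.Ioi (0:ℝ), f' y = 0 - F 0 :=
    integral_Ioi_of_hasDerivAt_of_tendsto' (fun x _ => hderiv x) hint.integrableOn
      (my_tendsto_mul_exp_atTop hb)
  have hIic : ∫ y in Set.Iic (0:ℝ), f' y = F 0 - 0 :=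
    integral_Iic_of_hasDerivAt_of_tendsto' (fun x _ => hderiv x) hint.integrableOn
      (my_tendsto_mul_exp_atBot hb)
  have htot : ∫ y : ℝ, f' y = 0 := by
    rw [← intervalIntegral.integral_Iic_add_Ioi (b := (0:ℝ)) hint.integrableOn hint.integrableOn, hIoi, hIic]
    ring
  have hsplit : ∫ y : ℝ, f' y
      = (∫ y : ℝ, y ^ 2 * Real.exp (-b * y ^ 2)) - (∫ y : ℝ, Real.exp (-b * y ^ 2)) / (2 * b) := by
    simp only [hf']
    rw [integral_sub (my_integrable_sq_mul_exp_neg_mul_sq hb)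
      ((integrable_exp_neg_mul_sq hb).div_const _), integral_div]
  rw [hsplit, integral_gaussian] at htot
  linarith

lemma my_complete_sq (θ₁ b x : ℝ) (hb : b ≠ 0) :
    Real.exp (-(θ₁ * x + b * x ^ 2))
      = Real.exp (b * (θ₁ / (2 * b)) ^ 2) * Real.exp (-b * (x + θ₁ / (2 * b)) ^ 2) := by
  rw [← Real.exp_add]
  congr 1
  field_simp
  ring

lemma my_Z (θ₁ b : ℝ) (hb : 0 < b) :
    ∫ y : ℝ, Real.exp (-(θ₁ * y + b * y ^ 2))
      = Real.exp (b * (θ₁ / (2 * b)) ^ 2) * Real.sqrt (π / b) := by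
  have h : ∀ y : ℝ, Real.exp (-(θ₁ * y + b * y ^ 2))
      = Real.exp (b * (θ₁ / (2 * b)) ^ 2)
        * ((fun z : ℝ => Real.exp (-b * z ^ 2)) (y + θ₁ / (2 * b))) :=
    fun y => my_complete_sq θ₁ b y hb.ne'
  simp_rw [h]
  rw [integral_const_mul, integral_add_right_eq_self (fun z : ℝ => Real.exp (-b * z ^ 2)) _,
    integral_gaussian]

lemma my_M1 (θ₁ b : ℝ) (hb : 0 < b) :
    ∫ x : ℝ, x * Real.exp (-(θ₁ * x + b * x ^ 2))
      = (-(θ₁ / (2 * b))) * (Real.exp (b * (θ₁ / (2 * b)) ^ 2) * Real.sqrt (π / b)) := by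
  set c := θ₁ / (2 * b) with hc
  have h : ∀ x : ℝ, x * Real.exp (-(θ₁ * x + b * x ^ 2))
      = Real.exp (b * c ^ 2) * ((fun y : ℝ => (y - c) * Real.exp (-b * y ^ 2)) (x + c)) := by
    intro x
    simp only [add_sub_cancel_right]
    rw [my_complete_sq θ₁ b x hb.ne']
    ring
  simp_rw [h]
  rw [integral_const_mul,
    integral_add_right_eq_self (fun y : ℝ => (y - c) * Real.exp (-b * y ^ 2)) c]
  have h2 : ∫ y : ℝ, (y - c) * Real.exp (-b * y ^ 2)
      = (∫ y : ℝ, y * Real.exp (-b * y ^ 2)) - c * ∫ y : ℝ, Real.exp (-b * y ^ 2) := by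
    rw [← integral_const_mul, ← integral_sub (integrable_mul_exp_neg_mul_sq hb)
      ((integrable_exp_neg_mul_sq hb).const_mul c)]
    congr 1; funext y; ring
  rw [h2, my_integral_mul_exp_neg_mul_sq_zero, integral_gaussian]
  ring

lemma my_M2 (θ₁ b : ℝ) (hb : 0 < b) :
    ∫ x : ℝ, x ^ 2 * Real.exp (-(θ₁ * x + b * x ^ 2))
      = ((θ₁ / (2 * b)) ^ 2 + 1 / (2 * b))
        * (Real.exp (b * (θ₁ / (2 * b)) ^ 2) * Real.sqrt (π / b)) := by
  set c := θ₁ / (2 * b) with hc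
  have h : ∀ x : ℝ, x ^ 2 * Real.exp (-(θ₁ * x + b * x ^ 2))
      = Real.exp (b * c ^ 2) * ((fun y : ℝ => (y - c) ^ 2 * Real.exp (-b * y ^ 2)) (x + c)) := by
    intro x
    simp only [add_sub_cancel_right]
    rw [my_complete_sq θ₁ b x hb.ne']
    ring
  simp_rw [h]
  rw [integral_const_mul,
    integral_add_right_eq_self (fun y : ℝ => (y - c) ^ 2 * Real.exp (-b * y ^ 2)) c]
  have heq : (fun y : ℝ => (y - c) ^ 2 * Real.exp (-b * y ^ 2))
      = fun y : ℝ => (y ^ 2 * Real.exp (-b * y ^ 2) - (2 * c) * (y * Real.exp (-b * y ^ 2)))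
        + c ^ 2 * Real.exp (-b * y ^ 2) := by
    funext y; ring
  have i2 : Integrable (fun y : ℝ => 2 * c * (y * Real.exp (-b * y ^ 2))) :=
    (integrable_mul_exp_neg_mul_sq hb).const_mul _
  have i1 : Integrable (fun y : ℝ =>
      y ^ 2 * Real.exp (-b * y ^ 2) - 2 * c * (y * Real.exp (-b * y ^ 2))) :=
    (my_integrable_sq_mul_exp_neg_mul_sq hb).sub i2
  have i3 : Integrable (fun y : ℝ => c ^ 2 * Real.exp (-b * y ^ 2)) :=
    (integrable_exp_neg_mul_sq hb).const_mul _
  rw [heq, integral_add i1 i3,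
    integral_sub (my_integrable_sq_mul_exp_neg_mul_sq hb) i2,
    integral_const_mul, integral_const_mul,
    my_integral_sq_mul_exp_neg_mul_sq hb, my_integral_mul_exp_neg_mul_sq_zero,
    integral_gaussian]
  ring

lemma my_eta1 (θ₁ b : ℝ) (hb : 0 < b) :
    (∫ x : ℝ, x * (Real.exp (-(θ₁ * x + b * x ^ 2)) /
        ∫ y : ℝ, Real.exp (-(θ₁ * y + b * y ^ 2)))) = -(θ₁ / (2 * b)) := by
  have hZpos : 0 < Real.exp (b * (θ₁ / (2 * b)) ^ 2) * Real.sqrt (π / b) := by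
    have h : 0 < π / b := div_pos Real.pi_pos hb
    positivity
  have hZ := my_Z θ₁ b hb
  have h : (∫ x : ℝ, x * (Real.exp (-(θ₁ * x + b * x ^ 2)) /
        ∫ y : ℝ, Real.exp (-(θ₁ * y + b * y ^ 2))))
      = (∫ x : ℝ, x * Real.exp (-(θ₁ * x + b * x ^ 2)))
        / ∫ y : ℝ, Real.exp (-(θ₁ * y + b * y ^ 2)) := by
    rw [div_eq_mul_inv, ← integral_mul_const]
    congr 1; funext x; rw [div_eq_mul_inv]; ring
  rw [h, my_M1 θ₁ b hb, hZ, mul_div_assoc, div_self hZpos.ne', mul_one]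

lemma my_eta2 (θ₁ b : ℝ) (hb : 0 < b) :
    (∫ x : ℝ, x ^ 2 * (Real.exp (-(θ₁ * x + b * x ^ 2)) /
        ∫ y : ℝ, Real.exp (-(θ₁ * y + b * y ^ 2)))) = (θ₁ / (2 * b)) ^ 2 + 1 / (2 * b) := by
  have hZpos : 0 < Real.exp (b * (θ₁ / (2 * b)) ^ 2) * Real.sqrt (π / b) := by
    have h : 0 < π / b := div_pos Real.pi_pos hb
    positivity
  have hZ := my_Z θ₁ b hb
  have h : (∫ x : ℝ, x ^ 2 * (Real.exp (-(θ₁ * x + b * x ^ 2)) /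
        ∫ y : ℝ, Real.exp (-(θ₁ * y + b * y ^ 2))))
      = (∫ x : ℝ, x ^ 2 * Real.exp (-(θ₁ * x + b * x ^ 2)))
        / ∫ y : ℝ, Real.exp (-(θ₁ * y + b * y ^ 2)) := by
    rw [div_eq_mul_inv, ← integral_mul_const]
    congr 1; funext x; rw [div_eq_mul_inv]; ring
  rw [h, my_M2 θ₁ b hb, hZ, mul_div_assoc, div_self hZpos.ne', mul_one]

lemma my_exists_root (Λ₁ Λ₂ : ℝ) (hΛ₁ : 0 < Λ₁) (hΛ₂ : 0 < Λ₂) (μ₁ μ₂ : ℝ) :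
    ∃ t : ℝ, 0 < t ∧
      t = Λ₂ * ((Λ₁ * μ₁ / (2 * t + Λ₁)) ^ 2 + 1 / (2 * t) - μ₂) := by
  set F : ℝ → ℝ := fun t => Λ₂ * ((Λ₁ * μ₁ / (2 * t + Λ₁)) ^ 2 + 1 / (2 * t) - μ₂) - t with hFdef
  set K : ℝ := Λ₂ * |μ₂| + 1 with hK
  have habs : (0:ℝ) ≤ |μ₂| := abs_nonneg _
  have hKpos : 0 < K := by positivity
  set t₀ : ℝ := min 1 (Λ₂ / (2 * K + 2)) with ht₀
  have ht₀pos : 0 < t₀ := lt_min one_pos (by positivity)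
  have ht₀le1 : t₀ ≤ 1 := min_le_left _ _
  set t₁ : ℝ := max 1 (Λ₂ * (μ₁ ^ 2 + 1 / 2 + |μ₂|) + 1) with ht₁
  have ht₁ge1 : (1:ℝ) ≤ t₁ := le_max_left _ _
  have ht₀t₁ : t₀ ≤ t₁ := le_trans ht₀le1 ht₁ge1
  -- F t₀ > 0
  have hFt₀ : 0 < F t₀ := by
    have h1 : 2 * t₀ ≤ Λ₂ / (K + 1) := by
      have hm : t₀ ≤ Λ₂ / (2 * K + 2) := min_le_right _ _
      calc 2 * t₀ ≤ 2 * (Λ₂ / (2 * K + 2)) := by linarith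
        _ = Λ₂ / (K + 1) := by
            rw [eq_div_iff (by positivity)]
            field_simp
    have h2 : K + 1 ≤ Λ₂ / (2 * t₀) := by
      rw [le_div_iff₀ (by positivity)]
      calc (K + 1) * (2 * t₀) ≤ (K + 1) * (Λ₂ / (K + 1)) :=
            mul_le_mul_of_nonneg_left h1 (by positivity)
        _ = Λ₂ := by field_simp
    have h3 : Λ₂ * μ₂ ≤ K - 1 := by
      have hμ : μ₂ ≤ |μ₂| := le_abs_self _
      nlinarith
    have h4 : 0 ≤ Λ₂ * (Λ₁ * μ₁ / (2 * t₀ + Λ₁)) ^ 2 := by positivity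
    have hexp : F t₀ = Λ₂ * (Λ₁ * μ₁ / (2 * t₀ + Λ₁)) ^ 2 + Λ₂ / (2 * t₀) - Λ₂ * μ₂ - t₀ := by
      simp only [hFdef]
      ring
    rw [hexp]
    linarith
  -- F t₁ < 0
  have hFt₁ : F t₁ < 0 := by
    have hd : (0:ℝ) < 2 * t₁ + Λ₁ := by linarith
    have hm : (Λ₁ * μ₁ / (2 * t₁ + Λ₁)) ^ 2 ≤ μ₁ ^ 2 := by
      rw [div_pow, div_le_iff₀ (by positivity)]
      nlinarith [mul_nonneg (sq_nonneg μ₁) (mul_nonneg (by linarith : (0:ℝ) ≤ t₁)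
          (by linarith : (0:ℝ) ≤ t₁)),
        mul_nonneg (sq_nonneg μ₁) (mul_nonneg (by linarith : (0:ℝ) ≤ t₁) hΛ₁.le)]
    have hinv : 1 / (2 * t₁) ≤ 1 / 2 :=
      one_div_le_one_div_of_le (by norm_num) (by linarith)
    have hμ : -μ₂ ≤ |μ₂| := neg_le_abs _
    have ht₁big : Λ₂ * (μ₁ ^ 2 + 1 / 2 + |μ₂|) + 1 ≤ t₁ := le_max_right _ _
    have hexp : F t₁ = Λ₂ * (Λ₁ * μ₁ / (2 * t₁ + Λ₁)) ^ 2 + Λ₂ * (1 / (2 * t₁))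
        + Λ₂ * (-μ₂) - t₁ := by
      simp only [hFdef]
      ring
    rw [hexp]
    nlinarith [mul_le_mul_of_nonneg_left hm hΛ₂.le, mul_le_mul_of_nonneg_left hinv hΛ₂.le,
      mul_le_mul_of_nonneg_left hμ hΛ₂.le]
  -- continuity
  have hne1 : ∀ t ∈ Set.Icc t₀ t₁, 2 * t + Λ₁ ≠ 0 := by
    intro t ht
    have := ht.1
    nlinarith
  have hne2 : ∀ t ∈ Set.Icc t₀ t₁, 2 * t ≠ 0 := by
    intro t ht
    have := ht.1
    nlinarith
  have hcont : ContinuousOn F (Set.Icc t₀ t₁) := by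
    apply ContinuousOn.sub _ continuousOn_id
    apply continuousOn_const.mul
    apply ContinuousOn.sub _ continuousOn_const
    apply ContinuousOn.add
    · exact (continuousOn_const.div (by fun_prop) hne1).pow 2
    · exact continuousOn_const.div (by fun_prop) hne2
  have h0 : (0:ℝ) ∈ Set.Icc (F t₁) (F t₀) := ⟨hFt₁.le, hFt₀.le⟩
  obtain ⟨t, htmem, htF⟩ := intermediate_value_Icc' ht₀t₁ hcont h0
  refine ⟨t, lt_of_lt_of_le ht₀pos htmem.1, ?_⟩
  simp only [hFdef] at htF
  linarith

/-- **Example 1 of the paper (existence part).** For the Gaussian exponential family with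
density `π θ x ∝ exp(−θ₁ x − θ₂ x²)` (with `θ₂ > 0`) and feature means
`η₁ θ = ∫ x π_θ(x) dx`, `η₂ θ = ∫ x² π_θ(x) dx`, the fixed-point equations
`θ₁ = Λ₁ (η₁ θ − μ₁)` and `θ₂ = Λ₂ (η₂ θ − μ₂)` have a solution with `θ₂ > 0` for every
target `(μ₁, μ₂) ∈ ℝ²` and all positive `Λ₁, Λ₂`. -/
theorem exists_fixed_point_gaussian
    (Λ₁ Λ₂ : ℝ) (hΛ₁ : 0 < Λ₁) (hΛ₂ : 0 < Λ₂) (μ₁ μ₂ : ℝ) :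
    ∃ θ₁ θ₂ : ℝ, 0 < θ₂ ∧
      θ₁ = Λ₁ * ((∫ x : ℝ, x * (Real.exp (-(θ₁ * x + θ₂ * x ^ 2)) /
                    ∫ y : ℝ, Real.exp (-(θ₁ * y + θ₂ * y ^ 2)))) - μ₁) ∧
      θ₂ = Λ₂ * ((∫ x : ℝ, x ^ 2 * (Real.exp (-(θ₁ * x + θ₂ * x ^ 2)) /
                    ∫ y : ℝ, Real.exp (-(θ₁ * y + θ₂ * y ^ 2)))) - μ₂) := by
  obtain ⟨t, ht, hteq⟩ := my_exists_root Λ₁ Λ₂ hΛ₁ hΛ₂ μ₁ μ₂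
  have hd : (0:ℝ) < 2 * t + Λ₁ := by linarith
  refine ⟨-(2 * t * Λ₁ * μ₁) / (2 * t + Λ₁), t, ht, ?_, ?_⟩
  · rw [my_eta1 _ t ht]
    rw [div_eq_iff hd.ne']
    field_simp
    ring
  · rw [my_eta2 _ t ht]
    have hsq : (-(2 * t * Λ₁ * μ₁) / (2 * t + Λ₁) / (2 * t)) ^ 2
        = (Λ₁ * μ₁ / (2 * t + Λ₁)) ^ 2 := by
      field_simp
    rw [hsq]
    exact hteq
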